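/- arXiv:2202.06308 — 3 statements merged into one kernel-verified Lean document; each statement's English description precedes it below -/
import Mathlib

section
/- For all r, d ∈ ℕ, the class TM(r,d) is closed under ultraproducts: if (G_i)_{i∈I} is a family of graphs in TM(r,d) and U is an ultrafilter on I, then the ultraproduct ∏_{i∈I} G_i / U belongs to TM(r,d). -/
universe u v w

namespace PF

/-- Syntax of monadic second-order (MSO) formulas over a relational vocabulary `R`
with arities `ar`.  First-order variables and set (monadic second-order) variables
are both indexed by natural numbers. -/
inductive MSO (R : Type u) (ar : R → ℕ) : Type u
  | eq : ℕ → ℕ → MSO R ar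
  | rel : (r : R) → (Fin (ar r) → ℕ) → MSO R ar
  | mem : ℕ → ℕ → MSO R ar
  | not : MSO R ar → MSO R ar
  | and : MSO R ar → MSO R ar → MSO R ar
  | exFO : ℕ → MSO R ar → MSO R ar
  | exSO : ℕ → MSO R ar → MSO R ar

/-- A relational structure over the vocabulary `R` with arities `ar`. -/
structure Struct (R : Type u) (ar : R → ℕ) : Type (max u (v + 1)) where
  carrier : Type v
  interp : (r : R) → (Fin (ar r) → carrier) → Prop

variable {R : Type u} {ar : R → ℕ}

/-- Satisfaction of an MSO formula in a structure, under a (partial) first-order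
assignment `ν` and a set-variable assignment `μ`. -/
def MSO.Sat (A : Struct.{u, v} R ar) :
    MSO R ar → (ℕ → Option A.carrier) → (ℕ → Set A.carrier) → Prop
  | .eq i j, ν, _ => ∃ x : A.carrier, ν i = some x ∧ ν j = some x
  | .rel r f, ν, _ =>
      ∃ g : Fin (ar r) → A.carrier, (∀ k, ν (f k) = some (g k)) ∧ A.interp r g
  | .mem i X, ν, μ => ∃ x : A.carrier, ν i = some x ∧ x ∈ μ X
  | .not φ, ν, μ => ¬ MSO.Sat A φ ν μ
  | .and φ ψ, ν, μ => MSO.Sat A φ ν μ ∧ MSO.Sat A ψ ν μ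
  | .exFO i φ, ν, μ => ∃ x : A.carrier, MSO.Sat A φ (Function.update ν i (some x)) μ
  | .exSO X φ, ν, μ => ∃ s : Set A.carrier, MSO.Sat A φ ν (Function.update μ X s)

/-- Truth of an MSO sentence in a structure. -/
def Struct.Models (A : Struct.{u, v} R ar) (φ : MSO R ar) : Prop :=
  MSO.Sat A φ (fun _ => none) (fun _ => ∅)

/-- Quantifier rank of an MSO formula (both first- and second-order quantifiers count). -/
def MSO.qr : MSO R ar → ℕ
  | .eq _ _ => 0
  | .rel _ _ => 0
  | .mem _ _ => 0
  | .not φ => φ.qr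
  | .and φ ψ => max φ.qr ψ.qr
  | .exFO _ φ => φ.qr + 1
  | .exSO _ φ => φ.qr + 1

/-- The first-order fragment: no set quantifiers and no set atoms. -/
def MSO.IsFO : MSO R ar → Prop
  | .eq _ _ => True
  | .rel _ _ => True
  | .mem _ _ => False
  | .not φ => φ.IsFO
  | .and φ ψ => φ.IsFO ∧ ψ.IsFO
  | .exFO _ φ => φ.IsFO
  | .exSO _ _ => False

/-- Free first-order variables. -/
def MSO.freeFO : MSO R ar → Set ℕ
  | .eq i j => {i, j}
  | .rel _ f => Set.range f
  | .mem i _ => {i}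
  | .not φ => φ.freeFO
  | .and φ ψ => φ.freeFO ∪ ψ.freeFO
  | .exFO i φ => φ.freeFO \ {i}
  | .exSO _ φ => φ.freeFO

/-- Free set variables. -/
def MSO.freeSO : MSO R ar → Set ℕ
  | .eq _ _ => ∅
  | .rel _ _ => ∅
  | .mem _ X => {X}
  | .not φ => φ.freeSO
  | .and φ ψ => φ.freeSO ∪ ψ.freeSO
  | .exFO _ φ => φ.freeSO
  | .exSO X φ => φ.freeSO \ {X}

/-- A sentence is a formula with no free (first- or second-order) variables. -/
def MSO.Closed (φ : MSO R ar) : Prop := φ.freeFO = ∅ ∧ φ.freeSO = ∅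

/-- `MSO[m]`-equivalence: agreement on all MSO sentences of quantifier rank at most `m`. -/
def MSOEquiv (m : ℕ) (A B : Struct.{u, v} R ar) : Prop :=
  ∀ φ : MSO R ar, φ.Closed → φ.qr ≤ m → (A.Models φ ↔ B.Models φ)

/-- `FO[m]`-equivalence: agreement on all FO sentences of quantifier rank at most `m`. -/
def FOEquiv (m : ℕ) (A B : Struct.{u, v} R ar) : Prop :=
  ∀ φ : MSO R ar, φ.IsFO → φ.Closed → φ.qr ≤ m → (A.Models φ ↔ B.Models φ)

/-- The substructure of `A` induced on a subset `s` of its universe. -/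
def Struct.induce (A : Struct.{u, v} R ar) (s : Set A.carrier) : Struct R ar where
  carrier := s
  interp r f := A.interp r fun k => (f k : A.carrier)

/-! ### Graphs as structures over the vocabulary `{E}` -/

abbrev graphAr : Unit → ℕ := fun _ => 2

/-- A simple graph viewed as an `{E}`-structure. -/
def graphStruct {V : Type v} (G : SimpleGraph V) : Struct Unit graphAr where
  carrier := V
  interp _ f := G.Adj (f 0) (f 1)

/-! ### Rooted trees, tree models and shrub-depth classes -/

/-- `w` is a leaf of the rooted tree `(t, rt)`: it has no strictly deeper neighbour
(no children). -/
def IsLeafAt {W : Type v} (t : SimpleGraph W) (rt w : W) : Prop :=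
  ∀ x, t.Adj w x → t.dist rt x ≤ t.dist rt w

/-- `(t, rt, lab, S)` together with the embedding `emb` (whose range is the set of
leaves) is a tree model of `r` labels and height `d` for the graph `G`.
Labels are natural numbers in `[r] = {1, …, r}` for leaves, and `r + 1` for
internal nodes; the signature `S ⊆ [r]² × [d]`. -/
structure IsTreeModel (r d : ℕ) {V : Type v} {W : Type v} (G : SimpleGraph V)
    (t : SimpleGraph W) (rt : W) (lab : W → ℕ) (S : Set (ℕ × ℕ × ℕ))
    (emb : V → W) : Prop where
  isTree : t.IsTree
  heightLe : ∀ w, t.dist rt w ≤ d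
  leafDepth : ∀ w, IsLeafAt t rt w → t.dist rt w = d
  embInj : Function.Injective emb
  leavesEq : Set.range emb = {w | IsLeafAt t rt w}
  leafLab : ∀ u : V, 1 ≤ lab (emb u) ∧ lab (emb u) ≤ r
  internalLab : ∀ w, ¬ IsLeafAt t rt w → lab w = r + 1
  sigSub : ∀ x ∈ S, 1 ≤ x.1 ∧ x.1 ≤ r ∧ 1 ≤ x.2.1 ∧ x.2.1 ≤ r ∧ 1 ≤ x.2.2 ∧ x.2.2 ≤ d
  sigSymm : ∀ i j l : ℕ, (i, j, l) ∈ S ↔ (j, i, l) ∈ S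
  edge : ∀ u u' : V, ∀ l : ℕ, t.dist (emb u) (emb u') = 2 * l →
      (G.Adj u u' ↔ (lab (emb u), lab (emb u'), l) ∈ S)

/-- `G ∈ TM(r, d)`: the (arbitrary-cardinality) graph `G` has a tree model of
`r` labels and height `d`. -/
def InTM (r d : ℕ) {V : Type v} (G : SimpleGraph V) : Prop :=
  ∃ (W : Type v) (t : SimpleGraph W) (rt : W) (lab : W → ℕ)
    (S : Set (ℕ × ℕ × ℕ)) (emb : V → W), IsTreeModel r d G t rt lab S emb

/-- `tower d n`: the `d`-fold iterated exponential of `n`. -/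
def tower : ℕ → ℕ → ℕ
  | 0, n => n
  | d + 1, n => 2 ^ tower d n

/-! ### p-labeled rooted trees -/

/-- Vocabulary of `p`-labeled rooted trees: `E`, `root`, and `P₁, …, P_p`. -/
inductive TreeSym (p : ℕ) : Type
  | edge : TreeSym p
  | isRoot : TreeSym p
  | lab : Fin p → TreeSym p

def treeAr {p : ℕ} : TreeSym p → ℕ
  | .edge => 2
  | .isRoot => 1
  | .lab _ => 1

/-- A `p`-labeled rooted tree of arbitrary cardinality. -/
structure PTree (p : ℕ) : Type (v + 1) where
  V : Type v
  graph : SimpleGraph V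
  isTree : graph.IsTree
  root : V
  label : V → Fin p

/-- A `p`-labeled rooted tree viewed as a structure over `{E, root, P₁, …, P_p}`. -/
def PTree.toStruct {p : ℕ} (t : PTree.{v} p) : Struct (TreeSym p) treeAr where
  carrier := t.V
  interp := fun s => match s with
    | .edge => fun f => t.graph.Adj (f ⟨0, by simp [treeAr]⟩) (f ⟨1, by simp [treeAr]⟩)
    | .isRoot => fun f => f ⟨0, by simp [treeAr]⟩ = t.root
    | .lab i => fun f => t.label (f ⟨0, by simp [treeAr]⟩) = i

/-- The tree has height at most `d`. -/
noncomputable def PTree.heightLe {p : ℕ} (t : PTree.{v} p) (d : ℕ) : Prop :=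
  ∀ x : t.V, t.graph.dist t.root x ≤ d

/-- The height of the tree: the supremum of root-to-node distances. -/
noncomputable def PTree.height {p : ℕ} (t : PTree.{v} p) : ℕ :=
  sSup (Set.range fun x => t.graph.dist t.root x)

/-- A leaf of a `p`-labeled rooted tree. -/
def PTree.IsLeaf {p : ℕ} (t : PTree.{v} p) (x : t.V) : Prop :=
  IsLeafAt t.graph t.root x

/-- The (leaf-hereditary when appropriate) subtree of `t` induced on a subset `s`
of nodes containing the root, provided the induced graph is again a tree. -/
def PTree.induce {p : ℕ} (t : PTree.{v} p) (s : Set t.V) (hr : t.root ∈ s)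
    (hT : (t.graph.induce s).IsTree) : PTree p where
  V := s
  graph := t.graph.induce s
  isTree := hT
  root := ⟨t.root, hr⟩
  label := fun x => t.label x

/-! ### Ultraproducts of graphs -/

/-- The `U`-almost-everywhere-equality setoid on a product of types. -/
def UltraSetoid {I : Type w} (U : Ultrafilter I) (V : I → Type v) :
    Setoid (∀ i, V i) where
  r a b := {i | a i = b i} ∈ U
  iseqv := by
    refine ⟨fun a => ?_, @fun a b h => ?_, @fun a b c h1 h2 => ?_⟩
    · have : {i | a i = a i} = Set.univ := by ext i; simp
      rw [this]
      exact Filter.univ_mem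
    · exact Filter.mem_of_superset h fun i hi => (hi : a i = b i).symm
    · exact Filter.mem_of_superset (Filter.inter_mem h1 h2) fun i hi =>
        (hi.1 : a i = b i).trans hi.2

/-- The ultraproduct of a family of types with respect to an ultrafilter. -/
def UltraProd {I : Type w} (U : Ultrafilter I) (V : I → Type v) : Type (max w v) :=
  Quotient (UltraSetoid U V)

/-- The ultraproduct of a family of simple graphs with respect to an ultrafilter. -/
def UltraProdGraph {I : Type w} (U : Ultrafilter I) {V : I → Type v}
    (G : ∀ i, SimpleGraph (V i)) : SimpleGraph (UltraProd U V) where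
  Adj x y :=
    Quotient.liftOn₂ x y (fun a b => {i | (G i).Adj (a i) (b i)} ∈ U)
      (by
        intro a b a' b' ha hb
        refine propext ⟨fun h => ?_, fun h => ?_⟩
        · refine Filter.mem_of_superset
            (Filter.inter_mem (Filter.inter_mem ha hb) h) fun i hi => ?_
          have h1 : a i = a' i := hi.1.1
          have h2 : b i = b' i := hi.1.2
          have h3 : (G i).Adj (a i) (b i) := hi.2
          show (G i).Adj (a' i) (b' i)
          rwa [h1, h2] at h3
        · have ha' : {i | a' i = a i} ∈ U :=
            Filter.mem_of_superset ha fun i hi => (hi : a i = a' i).symm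
          have hb' : {i | b' i = b i} ∈ U :=
            Filter.mem_of_superset hb fun i hi => (hi : b i = b' i).symm
          refine Filter.mem_of_superset
            (Filter.inter_mem (Filter.inter_mem ha' hb') h) fun i hi => ?_
          have h1 : a' i = a i := hi.1.1
          have h2 : b' i = b i := hi.1.2
          have h3 : (G i).Adj (a' i) (b' i) := hi.2
          show (G i).Adj (a i) (b i)
          rwa [h1, h2] at h3)
  symm := by
    refine ⟨fun x y => Quotient.inductionOn₂ x y fun a b h => ?_⟩
    exact Filter.mem_of_superset h fun i hi => (G i).adj_symm hi
  loopless := by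
    refine ⟨fun x => Quotient.inductionOn x fun a h => ?_⟩
    have h' : {i | (G i).Adj (a i) (a i)} ∈ U := h
    have he : {i | (G i).Adj (a i) (a i)} = (∅ : Set I) := by
      ext i
      simp
    rw [he] at h'
    exact Filter.empty_notMem (U : Filter I) h'



section AE
variable {I : Type} (U : Ultrafilter I)

lemma exists_ae_eq (f : I → ℕ) (n : ℕ) (h : ∀ i, f i ≤ n) :
    ∃ k, {i | f i = k} ∈ U := by
  by_contra hc
  push_neg at hc
  have hcompl : ∀ k, {i | f i = k}ᶜ ∈ U := fun k =>
    Ultrafilter.compl_mem_iff_notMem.2 (hc k)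
  have hmem : ⋂ k ∈ Finset.range (n + 1), {i | f i = k}ᶜ ∈ U :=
    (Filter.biInter_finset_mem _).2 fun k _ => hcompl k
  obtain ⟨i, hi⟩ := Filter.nonempty_of_mem hmem
  simp only [Set.mem_iInter, Set.mem_compl_iff, Set.mem_setOf_eq] at hi
  exact hi (f i) (Finset.mem_range.2 (Nat.lt_succ_of_le (h i))) rfl

lemma ae_eq_unique {f : I → ℕ} {k k' : ℕ} (h : {i | f i = k} ∈ U)
    (h' : {i | f i = k'} ∈ U) : k = k' := by
  obtain ⟨i, hi⟩ := Filter.nonempty_of_mem (Filter.inter_mem h h')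
  exact hi.1.symm.trans hi.2

end AE

section Chains
variable {α : Type*} {G : SimpleGraph α}

lemma walk_of_chain (f : ℕ → α) :
    ∀ n, (∀ j < n, G.Adj (f j) (f (j + 1))) →
      ∃ p : G.Walk (f 0) (f n), p.length = n ∧
        p.support = (List.range (n + 1)).map f
  | 0, _ => ⟨.nil, rfl, rfl⟩
  | n + 1, h => by
    obtain ⟨p, hl, hs⟩ := walk_of_chain f n (fun j hj => h j (Nat.lt_succ_of_lt hj))
    have ha : G.Adj (f n) (f (n + 1)) := h n (Nat.lt_succ_self n)
    refine ⟨p.concat ha, by simp [hl], ?_⟩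
    rw [SimpleGraph.Walk.support_concat, hs,
      List.range_succ (n := n + 1), List.map_append]
    simp

lemma support_eq_map_getVert {u v : α} (p : G.Walk u v) :
    p.support = (List.range (p.length + 1)).map p.getVert := by
  induction p with
  | nil => rfl
  | cons h q ih =>
    rw [SimpleGraph.Walk.support_cons, ih]
    conv_rhs => rw [SimpleGraph.Walk.length_cons, List.range_succ_eq_map,
      List.map_cons, List.map_map]
    simp only [SimpleGraph.Walk.getVert_zero, List.cons.injEq, true_and]
    exact (List.map_congr_left fun j _ =>
      SimpleGraph.Walk.getVert_cons_succ q h).symm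

end Chains


section Chains
variable {α : Type*} {G : SimpleGraph α}



lemma not_acyclic_of_chain (f : ℕ → α) (n : ℕ) (hn : 3 ≤ n)
    (hcyc : f n = f 0) (hadj : ∀ j < n, G.Adj (f j) (f (j + 1)))
    (hinj : ∀ j j', j < j' → j' < n → f j ≠ f j') : ¬ G.IsAcyclic := by
  obtain ⟨m, rfl⟩ : ∃ m, n = m + 1 := ⟨n - 1, by omega⟩
  -- the long path from f 1 to f 0
  obtain ⟨q, hql, hqs⟩ := walk_of_chain (G := G) (fun j => f (j + 1)) m
    (fun j hj => hadj (j + 1) (by omega))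
  have hq' : (fun j => f (j + 1)) m = f 0 := hcyc
  let q' : G.Walk (f 1) (f 0) := q.copy rfl hq'
  have hq'path : q'.IsPath := by
    rw [SimpleGraph.Walk.isPath_def]
    show q'.support.Nodup
    have : q'.support = q.support := SimpleGraph.Walk.support_copy _ _ _
    rw [this, hqs]
    refine (List.nodup_map_iff_inj_on List.nodup_range).2 ?_
    intro x hx y hy hxy
    simp only [List.mem_range] at hx hy
    by_contra hne
    rcases Nat.lt_or_ge x y with hlt | hge
    · rcases Nat.lt_or_ge (y + 1) (m + 1) with h1 | h1
      · exact hinj (x + 1) (y + 1) (by omega) h1 hxy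
      · have hy1 : y = m := by omega
        subst hy1
        exact hinj 0 (x + 1) (by omega) (by omega) (hcyc ▸ hxy).symm
    · have hlt : y < x := by omega
      rcases Nat.lt_or_ge (x + 1) (m + 1) with h1 | h1
      · exact hinj (y + 1) (x + 1) (by omega) h1 hxy.symm
      · have hx1 : x = m := by omega
        subst hx1
        exact hinj 0 (y + 1) (by omega) (by omega) (hcyc ▸ hxy.symm).symm
  intro hac
  have h10 : G.Adj (f 1) (f 0) := (hadj 0 (by omega)).symm
  have := SimpleGraph.isAcyclic_iff_path_unique.1 hac
    (SimpleGraph.Path.singleton h10) ⟨q', hq'path⟩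
  have hlen : (SimpleGraph.Path.singleton h10 : G.Path (f 1) (f 0)).1.length = q'.length := by
    rw [this]
  have : (1 : ℕ) = m := by
    simpa [SimpleGraph.Path.singleton, q', hql] using hlen
  omega



lemma chain_of_not_acyclic (h : ¬ G.IsAcyclic) :
    ∃ (n : ℕ) (f : ℕ → α), 3 ≤ n ∧ f n = f 0 ∧
      (∀ j < n, G.Adj (f j) (f (j + 1))) ∧
      (∀ j j', j < j' → j' < n → f j ≠ f j') := by
  simp only [SimpleGraph.IsAcyclic, not_forall, not_not] at h
  obtain ⟨v, c, hc⟩ := h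
  refine ⟨c.length, c.getVert, hc.three_le_length,
    (c.getVert_length).trans (c.getVert_zero).symm,
    fun j hj => c.adj_getVert_succ hj, ?_⟩
  have htail : c.support.tail.Nodup := hc.2
  have hst : c.support.tail = (List.range c.length).map (fun j => c.getVert (j + 1)) := by
    rw [support_eq_map_getVert c, List.range_succ_eq_map, List.map_cons, List.tail_cons,
      List.map_map]
    rfl
  rw [hst] at htail
  have hinj1 : ∀ x ∈ List.range c.length, ∀ y ∈ List.range c.length,
      c.getVert (x + 1) = c.getVert (y + 1) → x = y :=
    (List.nodup_map_iff_inj_on List.nodup_range).1 htail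
  intro j j' hjj' hj' heq
  rcases Nat.eq_zero_or_pos j with rfl | hj0
  · have h0 : c.getVert (( c.length - 1) + 1) = c.getVert ((j' - 1) + 1) := by
      have e1 : c.length - 1 + 1 = c.length := by omega
      have e2 : j' - 1 + 1 = j' := by omega
      rw [e1, e2, c.getVert_length, ← heq]
      exact (c.getVert_zero).symm
    have := hinj1 _ (List.mem_range.2 (by omega)) _ (List.mem_range.2 (by omega)) h0
    omega
  · have h0 : c.getVert ((j - 1) + 1) = c.getVert ((j' - 1) + 1) := by
      have e1 : j - 1 + 1 = j := by omega
      have e2 : j' - 1 + 1 = j' := by omega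
      rw [e1, e2, heq]
    have := hinj1 _ (List.mem_range.2 (by omega)) _ (List.mem_range.2 (by omega)) h0
    omega

end Chains

section Ultra
variable {I : Type} (U : Ultrafilter I) {W : I → Type} (t : ∀ i, SimpleGraph (W i))

lemma ultra_adj (a b : ∀ i, W i) :
    (UltraProdGraph U t).Adj (Quotient.mk (UltraSetoid U W) a) (Quotient.mk (UltraSetoid U W) b)
      ↔ {i | (t i).Adj (a i) (b i)} ∈ U := Iff.rfl

lemma walk_up (hconn : ∀ i, (t i).Connected) (a b : ∀ i, W i) {k : ℕ}
    (h : {i | (t i).dist (a i) (b i) = k} ∈ U) :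
    ∃ p : (UltraProdGraph U t).Walk (Quotient.mk (UltraSetoid U W) a)
      (Quotient.mk (UltraSetoid U W) b), p.length = k := by
  classical
  have hw : ∀ i, ∃ p : (t i).Walk (a i) (b i), p.length = (t i).dist (a i) (b i) :=
    fun i => ((hconn i) (a i) (b i)).exists_walk_length_eq_dist
  choose w hwlen using hw
  set c : ℕ → ∀ i, W i := fun j i => (w i).getVert j with hc
  have hc0 : c 0 = a := funext fun i => (w i).getVert_zero
  have hck : {i | c k i = b i} ∈ U := by
    refine Filter.mem_of_superset h fun i hi => ?_
    have : (w i).length = k := (hwlen i).trans hi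
    show (w i).getVert k = b i
    rw [← this]
    exact (w i).getVert_length
  have hadj : ∀ j < k, (UltraProdGraph U t).Adj (Quotient.mk (UltraSetoid U W) (c j))
      (Quotient.mk (UltraSetoid U W) (c (j + 1))) := by
    intro j hj
    refine Filter.mem_of_superset h fun i hi => ?_
    have hlen : (w i).length = k := (hwlen i).trans hi
    exact (w i).adj_getVert_succ (by omega)
  obtain ⟨p, hpl, -⟩ := walk_of_chain (G := UltraProdGraph U t)
    (fun j => Quotient.mk (UltraSetoid U W) (c j)) k hadj
  have e0 : Quotient.mk (UltraSetoid U W) (c 0) = Quotient.mk (UltraSetoid U W) a := by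
    rw [hc0]
  have ek : Quotient.mk (UltraSetoid U W) (c k) = Quotient.mk (UltraSetoid U W) b :=
    Quotient.sound hck
  exact ⟨p.copy e0 ek, (SimpleGraph.Walk.length_copy _ _ _).trans hpl⟩

lemma dist_le_down (a b : ∀ i, W i) (m : ℕ)
    (p : (UltraProdGraph U t).Walk (Quotient.mk (UltraSetoid U W) a)
      (Quotient.mk (UltraSetoid U W) b)) (hp : p.length = m) :
    {i | (t i).dist (a i) (b i) ≤ m} ∈ U := by
  classical
  set q : ℕ → ∀ i, W i := fun j => (p.getVert j).out with hq
  have h0 : {i | q 0 i = a i} ∈ U := by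
    refine Quotient.exact (s := UltraSetoid U W) ?_
    show Quotient.mk (UltraSetoid U W) (p.getVert 0).out = Quotient.mk (UltraSetoid U W) a
    exact (Quotient.out_eq _).trans p.getVert_zero
  have hm : {i | q m i = b i} ∈ U := by
    refine Quotient.exact (s := UltraSetoid U W) ?_
    show Quotient.mk (UltraSetoid U W) (p.getVert m).out = Quotient.mk (UltraSetoid U W) b
    subst hp; exact (Quotient.out_eq _).trans p.getVert_length
  have hA : ∀ j < m, {i | (t i).Adj (q j i) (q (j + 1) i)} ∈ U := by
    intro j hj
    have hadj : (UltraProdGraph U t).Adj (p.getVert j) (p.getVert (j + 1)) :=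
      p.adj_getVert_succ (by rw [hp]; exact hj)
    rw [← Quotient.out_eq (p.getVert j), ← Quotient.out_eq (p.getVert (j + 1))] at hadj
    exact hadj
  have hbig : {i | q 0 i = a i} ∩ ({i | q m i = b i} ∩
      ⋂ j ∈ Finset.range m, {i | (t i).Adj (q j i) (q (j + 1) i)}) ∈ U :=
    Filter.inter_mem h0 (Filter.inter_mem hm
      ((Filter.biInter_finset_mem _).2 fun j hj => hA j (Finset.mem_range.1 hj)))
  refine Filter.mem_of_superset hbig fun i hi => ?_
  obtain ⟨hi0, him, hiA⟩ := hi
  simp only [Set.mem_iInter, Set.mem_setOf_eq, Finset.mem_range] at hiA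
  obtain ⟨pw, hpwl, -⟩ := walk_of_chain (G := t i) (fun j => q j i) m
    (fun j hj => hiA j hj)
  have hd := SimpleGraph.dist_le pw
  rw [hpwl] at hd
  rwa [hi0, him] at hd

lemma ultra_dist (hconn : ∀ i, (t i).Connected) (a b : ∀ i, W i) {k : ℕ}
    (h : {i | (t i).dist (a i) (b i) = k} ∈ U) :
    (UltraProdGraph U t).dist (Quotient.mk (UltraSetoid U W) a)
      (Quotient.mk (UltraSetoid U W) b) = k := by
  obtain ⟨p, hpl⟩ := walk_up U t hconn a b h
  have hle : (UltraProdGraph U t).dist (Quotient.mk (UltraSetoid U W) a)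
      (Quotient.mk (UltraSetoid U W) b) ≤ k := hpl ▸ SimpleGraph.dist_le p
  refine le_antisymm hle ?_
  have hreach : (UltraProdGraph U t).Reachable (Quotient.mk (UltraSetoid U W) a)
      (Quotient.mk (UltraSetoid U W) b) := ⟨p⟩
  obtain ⟨p', hp'⟩ := hreach.exists_walk_length_eq_dist
  have hdown := dist_le_down U t a b _ p' hp'
  obtain ⟨i, hi1, hi2⟩ := Filter.nonempty_of_mem (Filter.inter_mem h hdown)
  exact le_trans (le_of_eq hi1.symm) hi2

end Ultra

open Classical in
noncomputable def aeNat {I : Type} (U : Ultrafilter I) (f : I → ℕ) : ℕ :=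
  if h : ∃ k, {i | f i = k} ∈ U then h.choose else 0

lemma aeNat_spec {I : Type} {U : Ultrafilter I} {f : I → ℕ}
    (h : ∃ k, {i | f i = k} ∈ U) : {i | f i = aeNat U f} ∈ U := by
  classical
  rw [aeNat]
  rw [dif_pos h]
  exact h.choose_spec

lemma aeNat_eq {I : Type} {U : Ultrafilter I} {f : I → ℕ} {k : ℕ}
    (h : {i | f i = k} ∈ U) : aeNat U f = k :=
  ae_eq_unique U (aeNat_spec ⟨k, h⟩) h

section Model
variable {r d : ℕ} {V W : Type v} {G : SimpleGraph V} {t : SimpleGraph W} {rt : W}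
  {lab : W → ℕ} {S : Set (ℕ × ℕ × ℕ)} {emb : V → W}

lemma IsTreeModel.leaf_iff (M : IsTreeModel r d G t rt lab S emb) (w : W) :
    IsLeafAt t rt w ↔ t.dist rt w = d :=
  ⟨M.leafDepth w, fun h x _ => (M.heightLe x).trans_eq h.symm⟩

lemma IsTreeModel.nonempty_V (M : IsTreeModel r d G t rt lab S emb) : Nonempty V := by
  have hbdd : BddAbove (Set.range fun x => t.dist rt x) :=
    ⟨d, by rintro _ ⟨x, rfl⟩; exact M.heightLe x⟩
  have hne : (Set.range fun x => t.dist rt x).Nonempty := ⟨_, ⟨rt, rfl⟩⟩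
  obtain ⟨w₀, hw₀⟩ := Nat.sSup_mem hne hbdd
  have hleaf : IsLeafAt t rt w₀ := by
    intro x _
    show t.dist rt x ≤ (fun x => t.dist rt x) w₀
    rw [hw₀]
    exact le_csSup hbdd ⟨x, rfl⟩
  have hmem : w₀ ∈ Set.range emb := by rw [M.leavesEq]; exact hleaf
  obtain ⟨u, -⟩ := hmem
  exact ⟨u⟩

lemma IsTreeModel.lab_le (M : IsTreeModel r d G t rt lab S emb) (w : W) :
    lab w ≤ r + 1 := by
  by_cases h : IsLeafAt t rt w
  · have hmem : w ∈ Set.range emb := by rw [M.leavesEq]; exact h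
    obtain ⟨u, rfl⟩ := hmem
    exact (M.leafLab u).2.trans (Nat.le_succ r)
  · exact le_of_eq (M.internalLab w h)

end Model

/-- `TM(r,d)` is closed under ultraproducts. -/
theorem ultraproduct_closed_TM (r d : ℕ) {I : Type} (U : Ultrafilter I)
    {V : I → Type} (G : ∀ i, SimpleGraph (V i)) (hG : ∀ i, InTM r d (G i)) :
    InTM r d (UltraProdGraph U G) := by
  classical
  choose W t rt lab Si emb M using hG
  have hcon : ∀ i, (t i).Connected := fun i => (M i).isTree.isConnected
  have hacy : ∀ i, (t i).IsAcyclic := fun i => (M i).isTree.IsAcyclic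
  have hdb : ∀ (a b : ∀ i, W i) (i : I), (t i).dist (a i) (b i) ≤ d + d := by
    intro a b i
    have h1 := (hcon i).dist_triangle (u := a i) (v := rt i) (w := b i)
    have h2 : (t i).dist (a i) (rt i) ≤ d := by
      rw [SimpleGraph.dist_comm]; exact (M i).heightLe _
    exact h1.trans (add_le_add h2 ((M i).heightLe _))
  have hdinU : ∀ a b : ∀ i, W i,
      {i | (t i).dist (a i) (b i) = aeNat U (fun i => (t i).dist (a i) (b i))} ∈ U :=
    fun a b => aeNat_spec (exists_ae_eq U _ (d + d) (hdb a b))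
  have hdist : ∀ a b : ∀ i, W i,
      (UltraProdGraph U t).dist (Quotient.mk (UltraSetoid U W) a)
        (Quotient.mk (UltraSetoid U W) b) = aeNat U (fun i => (t i).dist (a i) (b i)) :=
    fun a b => ultra_dist U t hcon a b (hdinU a b)
  have hheight : ∀ w, (UltraProdGraph U t).dist (Quotient.mk (UltraSetoid U W) rt) w ≤ d := by
    intro w
    obtain ⟨a, rfl⟩ : ∃ a, Quotient.mk (UltraSetoid U W) a = w := ⟨w.out, Quotient.out_eq w⟩
    rw [hdist rt a]
    obtain ⟨i, hi⟩ := Filter.nonempty_of_mem (hdinU rt a)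
    have hi' : (t i).dist (rt i) (a i) = aeNat U (fun i => (t i).dist (rt i) (a i)) := hi
    rw [← hi']
    exact (M i).heightLe _
  -- leaf characterization in the ultraproduct
  have hleafchar : ∀ a : ∀ i, W i,
      IsLeafAt (UltraProdGraph U t) (Quotient.mk (UltraSetoid U W) rt)
        (Quotient.mk (UltraSetoid U W) a) ↔
      (UltraProdGraph U t).dist (Quotient.mk (UltraSetoid U W) rt)
        (Quotient.mk (UltraSetoid U W) a) = d := by
    intro a
    have hkU := hdinU rt a
    have hkd := hdist rt a
    constructor
    · intro hl
      rw [hkd]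
      by_contra hne
      have hkle : aeNat U (fun i => (t i).dist (rt i) (a i)) ≤ d := by
        rw [← hkd]; exact hheight _
      have hnl : ∀ i ∈ {i | (t i).dist (rt i) (a i)
            = aeNat U (fun i => (t i).dist (rt i) (a i))},
          ∃ x, (t i).Adj (a i) x ∧ (t i).dist (rt i) (a i) < (t i).dist (rt i) x := by
        intro i hi
        have hi' : (t i).dist (rt i) (a i)
            = aeNat U (fun i => (t i).dist (rt i) (a i)) := hi
        have hnotleaf : ¬ IsLeafAt (t i) (rt i) (a i) := by
          intro hlf
          exact hne (by rw [← hi', (M i).leafDepth _ hlf])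
        simp only [IsLeafAt, not_forall, not_le] at hnotleaf
        obtain ⟨y, hy1, hy2⟩ := hnotleaf
        exact ⟨y, hy1, hy2⟩
      set x : ∀ i, W i := fun i =>
        if h : ∃ x, (t i).Adj (a i) x ∧ (t i).dist (rt i) (a i) < (t i).dist (rt i) x
        then h.choose else rt i with hx
      have hxs : ∀ i ∈ {i | (t i).dist (rt i) (a i)
            = aeNat U (fun i => (t i).dist (rt i) (a i))},
          (t i).Adj (a i) (x i) ∧ (t i).dist (rt i) (a i) < (t i).dist (rt i) (x i) := by
        intro i hi
        have hex := hnl i hi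
        show (t i).Adj (a i) (dite _ _ _) ∧ _ < (t i).dist (rt i) (dite _ _ _)
        rw [dif_pos hex]
        exact hex.choose_spec
      have hadj : (UltraProdGraph U t).Adj (Quotient.mk (UltraSetoid U W) a)
          (Quotient.mk (UltraSetoid U W) x) :=
        Filter.mem_of_superset hkU fun i hi => (hxs i hi).1
      have hled := hl _ hadj
      rw [hkd, hdist rt x] at hled
      obtain ⟨i, hi1, hi2⟩ := Filter.nonempty_of_mem (Filter.inter_mem hkU (hdinU rt x))
      have h1 : (t i).dist (rt i) (a i)
          = aeNat U (fun i => (t i).dist (rt i) (a i)) := hi1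
      have h2 : (t i).dist (rt i) (x i)
          = aeNat U (fun i => (t i).dist (rt i) (x i)) := hi2
      have h3 := (hxs i hi1).2
      omega
    · intro hd' y _
      rw [hd']
      exact hheight y
  -- acyclicity of the ultraproduct
  have hacyT : (UltraProdGraph U t).IsAcyclic := by
    by_contra hnot
    obtain ⟨n, f, hn3, hcyc, hadj, hinj⟩ := chain_of_not_acyclic hnot
    set g : ℕ → ∀ i, W i := fun j => (f j).out with hg
    have hgadj : ∀ j < n, {i | (t i).Adj (g j i) (g (j + 1) i)} ∈ U := by
      intro j hj
      have h := hadj j hj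
      rw [← Quotient.out_eq (f j), ← Quotient.out_eq (f (j + 1))] at h
      exact h
    have hgne : ∀ j j', j < j' → j' < n → {i | g j i ≠ g j' i} ∈ U := by
      intro j j' h1 h2
      have hne := hinj j j' h1 h2
      have hnot' : {i | g j i = g j' i} ∉ U := by
        intro hmem
        exact hne (by
          rw [← Quotient.out_eq (f j), ← Quotient.out_eq (f j')]
          exact Quotient.sound hmem)
      exact Ultrafilter.compl_mem_iff_notMem.2 hnot'
    have hbig : ((⋂ j ∈ Finset.range n, {i | (t i).Adj (g j i) (g (j + 1) i)}) ∩
        ⋂ q ∈ Finset.range n ×ˢ Finset.range n,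
          (if q.1 < q.2 then {i | g q.1 i ≠ g q.2 i} else Set.univ)) ∈ U := by
      refine Filter.inter_mem
        ((Filter.biInter_finset_mem _).2 fun j hj => hgadj j (Finset.mem_range.1 hj))
        ((Filter.biInter_finset_mem _).2 ?_)
      rintro ⟨j, j'⟩ hq
      dsimp only
      split_ifs with hlt
      · exact hgne j j' hlt (Finset.mem_range.1 (Finset.mem_product.1 hq).2)
      · exact Filter.univ_mem
    obtain ⟨i, hi1, hi2⟩ := Filter.nonempty_of_mem hbig
    simp only [Set.mem_iInter, Finset.mem_range, Set.mem_setOf_eq] at hi1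
    have hcyci : g n i = g 0 i := by rw [hg]; show (f n).out i = (f 0).out i; rw [hcyc]
    have hinji : ∀ j j', j < j' → j' < n → g j i ≠ g j' i := by
      intro j j' h1 h2
      have hq : (j, j') ∈ Finset.range n ×ˢ Finset.range n :=
        Finset.mem_product.2 ⟨Finset.mem_range.2 (h1.trans h2), Finset.mem_range.2 h2⟩
      have := Set.mem_iInter₂.1 hi2 (j, j') hq
      rw [if_pos h1] at this
      exact this
    exact not_acyclic_of_chain (fun j => g j i) n hn3 hcyci (fun j hj => hi1 j hj) hinji (hacy i)
  -- the witnesses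
  refine ⟨UltraProd U W, UltraProdGraph U t, Quotient.mk (UltraSetoid U W) rt,
    fun w => aeNat U (fun i => lab i (w.out i)),
    {x : ℕ × ℕ × ℕ | (1 ≤ x.1 ∧ x.1 ≤ r ∧ 1 ≤ x.2.1 ∧ x.2.1 ≤ r ∧ 1 ≤ x.2.2 ∧ x.2.2 ≤ d)
      ∧ {i | x ∈ Si i} ∈ U},
    fun u => Quotient.mk (UltraSetoid U W) (fun i => emb i (u.out i)),
    ?_, ?_, ?_, ?_, ?_, ?_, ?_, ?_, ?_, ?_⟩
  · -- isTree
    refine ⟨?_, hacyT⟩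
    have hne : Nonempty (UltraProd U W) := ⟨Quotient.mk (UltraSetoid U W) rt⟩
    refine ⟨fun x y => ?_⟩
    obtain ⟨a, rfl⟩ : ∃ a, Quotient.mk (UltraSetoid U W) a = x := ⟨x.out, Quotient.out_eq x⟩
    obtain ⟨b, rfl⟩ : ∃ b, Quotient.mk (UltraSetoid U W) b = y := ⟨y.out, Quotient.out_eq y⟩
    obtain ⟨p, -⟩ := walk_up U t hcon a b (hdinU a b)
    exact ⟨p⟩
  · -- heightLe
    exact hheight
  · -- leafDepth
    intro w hlf
    obtain ⟨a, rfl⟩ : ∃ a, Quotient.mk (UltraSetoid U W) a = w := ⟨w.out, Quotient.out_eq w⟩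
    exact (hleafchar a).1 hlf
  · -- embInj
    intro u u' h
    have hs := Quotient.exact h
    have hs' : {i | u.out i = u'.out i} ∈ U :=
      Filter.mem_of_superset hs fun i hi => (M i).embInj hi
    rw [← Quotient.out_eq u, ← Quotient.out_eq u']
    exact Quotient.sound hs'
  · -- leavesEq
    ext w
    simp only [Set.mem_range, Set.mem_setOf_eq]
    constructor
    · rintro ⟨u, rfl⟩
      refine (hleafchar (fun i => emb i (u.out i))).2 ?_
      rw [hdist]
      refine aeNat_eq (Filter.univ_mem' fun i => ?_)
      show (t i).dist (rt i) (emb i (u.out i)) = d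
      refine (M i).leafDepth _ ?_
      have hmem : emb i (u.out i) ∈ Set.range (emb i) := ⟨u.out i, rfl⟩
      rw [(M i).leavesEq] at hmem
      exact hmem
    · intro hlf
      obtain ⟨a, rfl⟩ : ∃ a, Quotient.mk (UltraSetoid U W) a = w := ⟨w.out, Quotient.out_eq w⟩
      have hd' := (hleafchar a).1 hlf
      rw [hdist rt a] at hd'
      have h1 := hdinU rt a
      rw [hd'] at h1
      set u' : ∀ i, V i := fun i =>
        if h : ∃ v, emb i v = a i then h.choose else ((M i).nonempty_V).some with hu'
      have h2 : ∀ i ∈ {i | (t i).dist (rt i) (a i) = d}, emb i (u' i) = a i := by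
        intro i hi
        have hi' : (t i).dist (rt i) (a i) = d := hi
        have hlf_i : IsLeafAt (t i) (rt i) (a i) := ((M i).leaf_iff _).2 hi'
        have hmem : a i ∈ Set.range (emb i) := by rw [(M i).leavesEq]; exact hlf_i
        have hex : ∃ v, emb i v = a i := hmem
        show emb i (dite _ _ _) = a i
        rw [dif_pos hex]
        exact hex.choose_spec
      refine ⟨Quotient.mk (UltraSetoid U V) u', ?_⟩
      have h3 : {i | (Quotient.mk (UltraSetoid U V) u').out i = u' i} ∈ U :=
        Quotient.exact (Quotient.out_eq (Quotient.mk (UltraSetoid U V) u'))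
      refine Quotient.sound ?_
      refine Filter.mem_of_superset (Filter.inter_mem h3 h1) fun i hi => ?_
      show emb i ((Quotient.mk (UltraSetoid U V) u').out i) = a i
      rw [hi.1]
      exact h2 i hi.2
  · -- leafLab
    intro u
    have hex : ∃ k, {i | lab i ((Quotient.mk (UltraSetoid U W)
        (fun i => emb i (u.out i))).out i) = k} ∈ U :=
      exists_ae_eq U _ (r + 1) fun i => (M i).lab_le _
    have hs := aeNat_spec hex
    have he : {i | (Quotient.mk (UltraSetoid U W) (fun i => emb i (u.out i))).out i
        = emb i (u.out i)} ∈ U := Quotient.exact (Quotient.out_eq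
          (Quotient.mk (UltraSetoid U W) (fun i => emb i (u.out i))))
    obtain ⟨i, hi1, hi2⟩ := Filter.nonempty_of_mem (Filter.inter_mem hs he)
    have hi1' : lab i ((Quotient.mk (UltraSetoid U W) (fun i => emb i (u.out i))).out i)
        = aeNat U (fun i => lab i ((Quotient.mk (UltraSetoid U W)
          (fun i => emb i (u.out i))).out i)) := hi1
    have hi2' : (Quotient.mk (UltraSetoid U W) (fun i => emb i (u.out i))).out i
        = emb i (u.out i) := hi2
    have hkey : aeNat U (fun i => lab i ((Quotient.mk (UltraSetoid U W)
        (fun i => emb i (u.out i))).out i)) = lab i (emb i (u.out i)) := by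
      rw [← hi1', hi2']
    show 1 ≤ aeNat U (fun i => lab i ((Quotient.mk (UltraSetoid U W)
        (fun i => emb i (u.out i))).out i)) ∧ aeNat U (fun i => lab i ((Quotient.mk
        (UltraSetoid U W) (fun i => emb i (u.out i))).out i)) ≤ r
    rw [hkey]
    exact (M i).leafLab _
  · -- internalLab
    intro w hnl
    obtain ⟨a, rfl⟩ : ∃ a, Quotient.mk (UltraSetoid U W) a = w := ⟨w.out, Quotient.out_eq w⟩
    have hd' : aeNat U (fun i => (t i).dist (rt i) (a i)) ≠ d := by
      intro h
      exact hnl ((hleafchar a).2 (by rw [hdist rt a, h]))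
    have h2 : {i | lab i (a i) = r + 1} ∈ U := by
      refine Filter.mem_of_superset (hdinU rt a) fun i hi => ?_
      have hi' : (t i).dist (rt i) (a i)
          = aeNat U (fun i => (t i).dist (rt i) (a i)) := hi
      refine (M i).internalLab _ fun hlf => ?_
      exact hd' (hi'.symm.trans ((M i).leafDepth _ hlf))
    have he : {i | (Quotient.mk (UltraSetoid U W) a).out i = a i} ∈ U :=
      Quotient.exact (Quotient.out_eq (Quotient.mk (UltraSetoid U W) a))
    show aeNat U (fun i => lab i ((Quotient.mk (UltraSetoid U W) a).out i)) = r + 1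
    refine aeNat_eq (Filter.mem_of_superset (Filter.inter_mem he h2) fun i hi => ?_)
    show lab i ((Quotient.mk (UltraSetoid U W) a).out i) = r + 1
    rw [hi.1]
    exact hi.2
  · -- sigSub
    rintro x ⟨h1, -⟩
    exact h1
  · -- sigSymm
    intro i j l
    constructor
    · rintro ⟨⟨h1, h2, h3, h4, h5, h6⟩, hU⟩
      exact ⟨⟨h3, h4, h1, h2, h5, h6⟩,
        Filter.mem_of_superset hU fun i' hi' => ((M i').sigSymm _ _ _).1 hi'⟩
    · rintro ⟨⟨h1, h2, h3, h4, h5, h6⟩, hU⟩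
      exact ⟨⟨h3, h4, h1, h2, h5, h6⟩,
        Filter.mem_of_superset hU fun i' hi' => ((M i').sigSymm _ _ _).1 hi'⟩
  · -- edge
    intro u u' l hd2
    have hAdjIff := ultra_adj U G u.out u'.out
    rw [Quotient.out_eq u, Quotient.out_eq u'] at hAdjIff
    have hd3 : (UltraProdGraph U t).dist
        (Quotient.mk (UltraSetoid U W) (fun i => emb i (u.out i)))
        (Quotient.mk (UltraSetoid U W) (fun i => emb i (u'.out i))) = 2 * l := hd2
    rw [hdist] at hd3
    have h1 := hdinU (fun i => emb i (u.out i)) (fun i => emb i (u'.out i))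
    rw [hd3] at h1
    have hsp := aeNat_spec (exists_ae_eq U (fun i => lab i ((Quotient.mk (UltraSetoid U W)
        (fun i => emb i (u.out i))).out i)) (r + 1) fun i => (M i).lab_le _)
    have hep : {i | (Quotient.mk (UltraSetoid U W) (fun i => emb i (u.out i))).out i
        = emb i (u.out i)} ∈ U := Quotient.exact (Quotient.out_eq
          (Quotient.mk (UltraSetoid U W) (fun i => emb i (u.out i))))
    have hlabp : {i | lab i (emb i (u.out i)) = aeNat U (fun i => lab i ((Quotient.mk
        (UltraSetoid U W) (fun i => emb i (u.out i))).out i))} ∈ U := by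
      refine Filter.mem_of_superset (Filter.inter_mem hep hsp) fun i hi => ?_
      obtain ⟨hi1, hi2⟩ := hi
      show lab i (emb i (u.out i)) = _
      rw [← (show _ = emb i (u.out i) from hi1)]
      exact hi2
    have hsq := aeNat_spec (exists_ae_eq U (fun i => lab i ((Quotient.mk (UltraSetoid U W)
        (fun i => emb i (u'.out i))).out i)) (r + 1) fun i => (M i).lab_le _)
    have heq' : {i | (Quotient.mk (UltraSetoid U W) (fun i => emb i (u'.out i))).out i
        = emb i (u'.out i)} ∈ U := Quotient.exact (Quotient.out_eq
          (Quotient.mk (UltraSetoid U W) (fun i => emb i (u'.out i))))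
    have hlabq : {i | lab i (emb i (u'.out i)) = aeNat U (fun i => lab i ((Quotient.mk
        (UltraSetoid U W) (fun i => emb i (u'.out i))).out i))} ∈ U := by
      refine Filter.mem_of_superset (Filter.inter_mem heq' hsq) fun i hi => ?_
      obtain ⟨hi1, hi2⟩ := hi
      show lab i (emb i (u'.out i)) = _
      rw [← (show _ = emb i (u'.out i) from hi1)]
      exact hi2
    constructor
    · intro hA
      have sA := hAdjIff.1 hA
      have sS : {i | (aeNat U (fun i => lab i ((Quotient.mk (UltraSetoid U W)
          (fun i => emb i (u.out i))).out i)),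
          aeNat U (fun i => lab i ((Quotient.mk (UltraSetoid U W)
          (fun i => emb i (u'.out i))).out i)), l) ∈ Si i} ∈ U := by
        refine Filter.mem_of_superset (Filter.inter_mem sA (Filter.inter_mem h1
          (Filter.inter_mem hlabp hlabq))) fun i hi => ?_
        obtain ⟨hiA, hiD, hiP, hiQ⟩ := hi
        have hiD' : (t i).dist (emb i (u.out i)) (emb i (u'.out i)) = 2 * l := hiD
        have hmem := ((M i).edge (u.out i) (u'.out i) l hiD').1 hiA
        have hiP' : lab i (emb i (u.out i)) = _ := hiP
        have hiQ' : lab i (emb i (u'.out i)) = _ := hiQ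
        show (_, _, l) ∈ Si i
        rw [← hiP', ← hiQ']
        exact hmem
      obtain ⟨i0, hi0⟩ := Filter.nonempty_of_mem sS
      exact ⟨(M i0).sigSub _ hi0, sS⟩
    · rintro ⟨-, sS⟩
      refine hAdjIff.2 ?_
      refine Filter.mem_of_superset (Filter.inter_mem sS (Filter.inter_mem h1
        (Filter.inter_mem hlabp hlabq))) fun i hi => ?_
      obtain ⟨hiS, hiD, hiP, hiQ⟩ := hi
      have hiD' : (t i).dist (emb i (u.out i)) (emb i (u'.out i)) = 2 * l := hiD
      refine ((M i).edge (u.out i) (u'.out i) l hiD').2 ?_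
      have hiP' : lab i (emb i (u.out i)) = _ := hiP
      have hiQ' : lab i (emb i (u'.out i)) = _ := hiQ
      rw [hiP', hiQ']
      exact hiS


end PF
end

section
/- For all r, d ∈ ℕ, the class TM(r,d) is closed under ultraroots: if H is an arbitrary graph and some ultrapower of H (with respect to an ultrafilter U on an index set I) belongs to TM(r,d), then H belongs to TM(r,d). -/
universe u v w

namespace PF

variable {R : Type u} {ar : R → ℕ}

/-! ### Auxiliary lemmas for the ultraroot closure theorem -/

section UltrarootAux
open SimpleGraph

variable {Vt : Type v} {t : SimpleGraph Vt}

lemma isPath_length_eq_dist (hT : t.IsTree) {a b : Vt} {p : t.Walk a b} (hp : p.IsPath) :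
    p.length = t.dist a b := by
  classical
  obtain ⟨q, hq, hql⟩ := hT.isConnected.exists_path_of_dist a b
  rw [(hT.existsUnique_path a b).unique hp hq, hql]

lemma dist_add_of_mem_support (hT : t.IsTree) {a b x : Vt} {p : t.Walk a b}
    (hp : p.IsPath) (hx : x ∈ p.support) :
    t.dist a x + t.dist x b = t.dist a b := by
  classical
  have h1 := isPath_length_eq_dist hT (hp.takeUntil hx)
  have h2 := isPath_length_eq_dist hT (hp.dropUntil hx)
  have h3 := congrArg SimpleGraph.Walk.length (p.take_spec hx)
  rw [SimpleGraph.Walk.length_append] at h3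
  rw [← isPath_length_eq_dist hT hp, ← h3, h1, h2]

lemma support_subset_of_paths (hT : t.IsTree) {rt a b x : Vt} {p : t.Walk a b}
    (hp : p.IsPath) (p1 : t.Walk rt a) (p2 : t.Walk rt b)
    (hx : x ∈ p.support) : x ∈ p1.support ∨ x ∈ p2.support := by
  classical
  have hq : (p1.reverse.append p2).bypass.IsPath := Walk.bypass_isPath _
  have he : p = (p1.reverse.append p2).bypass := (hT.existsUnique_path a b).unique hp hq
  rw [he] at hx
  have hmem := Walk.support_bypass_subset _ hx
  rw [Walk.mem_support_append_iff] at hmem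
  rcases hmem with h | h
  · left; rwa [Walk.support_reverse, List.mem_reverse] at h
  · right; exact h

lemma exists_walk_induce {s : Set Vt} :
    ∀ {a b : Vt} (p : t.Walk a b) (ha : a ∈ s) (hb : b ∈ s),
      (∀ x ∈ p.support, x ∈ s) →
      ∃ q : (t.induce s).Walk ⟨a, ha⟩ ⟨b, hb⟩, q.length = p.length := by
  intro a b p
  induction p with
  | nil => exact fun ha hb _ => ⟨Walk.nil, rfl⟩
  | @cons a c b h q ih =>
    intro ha hb hs
    have hc : c ∈ s := hs c (by simp)
    obtain ⟨q', hq'⟩ := ih hc hb (fun x hx => hs x (by simp [hx]))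
    exact ⟨Walk.cons (by exact h) q', by show q'.length + 1 = q.length + 1; rw [hq']⟩

lemma dist_induce (hT : t.IsTree) {s : Set Vt}
    (hs : ∀ ⦃a b : Vt⦄, a ∈ s → b ∈ s → ∀ (p : t.Walk a b), p.IsPath → ∀ x ∈ p.support, x ∈ s)
    {a b : Vt} (ha : a ∈ s) (hb : b ∈ s) :
    (t.induce s).dist ⟨a, ha⟩ ⟨b, hb⟩ = t.dist a b := by
  obtain ⟨p, hp, hpl⟩ := hT.isConnected.exists_path_of_dist a b
  obtain ⟨q, hq⟩ := exists_walk_induce p ha hb (hs ha hb p hp)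
  have hle : (t.induce s).dist ⟨a, ha⟩ ⟨b, hb⟩ ≤ t.dist a b := by
    rw [← hpl, ← hq]; exact SimpleGraph.dist_le q
  have hreach : (t.induce s).Reachable ⟨a, ha⟩ ⟨b, hb⟩ := ⟨q⟩
  obtain ⟨q', _, hq'l⟩ := hreach.exists_path_of_dist
  have hge : t.dist a b ≤ q'.length := by
    have := SimpleGraph.dist_le (q'.map (SimpleGraph.Embedding.induce s).toHom)
    rwa [SimpleGraph.Walk.length_map] at this
  omega

lemma exists_leaf_of_heightLe (rt : Vt) (d : ℕ) (hle : ∀ x : Vt, t.dist rt x ≤ d) :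
    ∃ x, IsLeafAt t rt x := by
  have hne : (Set.range (t.dist rt)).Nonempty := ⟨_, ⟨rt, rfl⟩⟩
  have hbdd : BddAbove (Set.range (t.dist rt)) := ⟨d, by rintro _ ⟨x, rfl⟩; exact hle x⟩
  obtain ⟨x, hx⟩ := Nat.sSup_mem hne hbdd
  refine ⟨x, fun y _ => ?_⟩
  rw [hx]
  exact le_csSup hbdd ⟨y, rfl⟩

lemma inTM_of_embed {r d : ℕ} {V V' : Type v} {G : SimpleGraph V} {H : SimpleGraph V'}
    (f : V' → V) (hinj : Function.Injective f)
    (hadj : ∀ u v : V', H.Adj u v ↔ G.Adj (f u) (f v))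
    (hnonempty : Nonempty V → Nonempty V')
    (h : InTM r d G) : InTM r d H := by
  obtain ⟨W, t, rt, lab, S, emb, M⟩ := h
  have hT := M.isTree
  have hconn := hT.isConnected
  -- V' is nonempty since every tree model has a leaf
  obtain ⟨w0, hw0⟩ := exists_leaf_of_heightLe rt d M.heightLe
  have hw0' : w0 ∈ Set.range emb := by rw [M.leavesEq]; exact hw0
  obtain ⟨v0, -⟩ := hw0'
  obtain ⟨u0⟩ : Nonempty V' := hnonempty ⟨v0⟩
  -- the pruned vertex set: ancestors of leaves of the form `emb (f u)`
  set lf : V' → W := fun u => emb (f u) with hlf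
  set K : Set W := {w | ∃ u : V', t.dist rt w + t.dist w (lf u) = t.dist rt (lf u)} with hK
  have hrtK : rt ∈ K := ⟨u0, by rw [SimpleGraph.dist_self, Nat.zero_add]⟩
  have hlfK : ∀ u, lf u ∈ K := fun u => ⟨u, by rw [SimpleGraph.dist_self, Nat.add_zero]⟩
  have htrans : ∀ {x w : W} {u : V'}, t.dist rt x + t.dist x w = t.dist rt w →
      t.dist rt w + t.dist w (lf u) = t.dist rt (lf u) →
      t.dist rt x + t.dist x (lf u) = t.dist rt (lf u) := by
    intro x w u h1 h2
    have t1 := hconn.dist_triangle (u := rt) (v := x) (w := lf u)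
    have t2 := hconn.dist_triangle (u := x) (v := w) (w := lf u)
    omega
  have hKgeo : ∀ ⦃a b : W⦄, a ∈ K → b ∈ K → ∀ (p : t.Walk a b), p.IsPath →
      ∀ x ∈ p.support, x ∈ K := by
    rintro a b ⟨ua, hua⟩ ⟨ub, hub⟩ p hp x hx
    obtain ⟨p1, hp1, -⟩ := hconn.exists_path_of_dist rt a
    obtain ⟨p2, hp2, -⟩ := hconn.exists_path_of_dist rt b
    rcases support_subset_of_paths hT hp p1 p2 hx with hmem | hmem
    · exact ⟨ua, htrans (dist_add_of_mem_support hT hp1 hmem) hua⟩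
    · exact ⟨ub, htrans (dist_add_of_mem_support hT hp2 hmem) hub⟩
  have hdist : ∀ (a b : W) (ha : a ∈ K) (hb : b ∈ K),
      (t.induce K).dist ⟨a, ha⟩ ⟨b, hb⟩ = t.dist a b :=
    fun a b ha hb => dist_induce hT hKgeo ha hb
  -- the induced graph on K is a tree
  have hreach : ∀ (a : W) (ha : a ∈ K), (t.induce K).Reachable ⟨rt, hrtK⟩ ⟨a, ha⟩ := by
    intro a ha
    obtain ⟨p, hp, -⟩ := hconn.exists_path_of_dist rt a
    obtain ⟨q, -⟩ := exists_walk_induce p hrtK ha (hKgeo hrtK ha p hp)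
    exact ⟨q⟩
  have hTind : (t.induce K).IsTree := by
    constructor
    · exact { preconnected := fun a b => ((hreach a.1 a.2).symm.trans (hreach b.1 b.2)),
              nonempty := ⟨⟨rt, hrtK⟩⟩ }
    · intro x p hp
      exact hT.IsAcyclic _
        ((SimpleGraph.Walk.map_isCycle_iff_of_injective
          (f := (SimpleGraph.Embedding.induce K).toHom)
          (fun a b hab => Subtype.ext hab)).mpr hp)
  -- every leaf of `t` in the image of `emb ∘ f` and `t`-leaf facts
  have htleaflf : ∀ u : V', IsLeafAt t rt (lf u) := by
    intro u
    have h1 : lf u ∈ Set.range emb := ⟨f u, rfl⟩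
    rwa [M.leavesEq] at h1
  -- leaves of the induced tree are exactly the `lf u`
  have hleafK : ∀ (w : W) (hw : w ∈ K),
      IsLeafAt (t.induce K) ⟨rt, hrtK⟩ ⟨w, hw⟩ → ∃ u : V', w = lf u := by
    intro w hw hleaf
    obtain ⟨u, hu⟩ := hw
    by_cases hwe : w = lf u
    · exact ⟨u, hwe⟩
    exfalso
    have hpos : 0 < t.dist w (lf u) := hconn.pos_dist_of_ne hwe
    obtain ⟨p, hp, hpl⟩ := hconn.exists_path_of_dist w (lf u)
    cases p with
    | nil => exact hwe rfl
    | @cons _ x _ hadjx q =>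
      have hq : t.dist x (lf u) ≤ q.length := SimpleGraph.dist_le q
      have hlen : q.length + 1 = t.dist w (lf u) := by
        simpa [SimpleGraph.Walk.length_cons] using hpl
      have ht1 : t.dist rt (lf u) ≤ t.dist rt x + t.dist x (lf u) := hconn.dist_triangle
      have ht2 : t.dist rt x ≤ t.dist rt w + t.dist w x := hconn.dist_triangle
      have hwx : t.dist w x ≤ 1 := by
        simpa using SimpleGraph.dist_le (SimpleGraph.Walk.cons hadjx SimpleGraph.Walk.nil)
      have hx2 : t.dist rt x + t.dist x (lf u) = t.dist rt (lf u) := by omega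
      have hxK : x ∈ K := ⟨u, hx2⟩
      have hwK : w ∈ K := ⟨u, hu⟩
      have hAdj : (t.induce K).Adj ⟨w, hwK⟩ ⟨x, hxK⟩ := hadjx
      have hle := hleaf _ hAdj
      rw [hdist rt x hrtK hxK, hdist rt w hrtK hwK] at hle
      omega
  have hleaflf : ∀ u : V', IsLeafAt (t.induce K) ⟨rt, hrtK⟩ ⟨lf u, hlfK u⟩ := by
    intro u x hx
    obtain ⟨x, hxK⟩ := x
    have hadjx : t.Adj (lf u) x := hx
    have hle := htleaflf u x hadjx
    rw [hdist rt x hrtK hxK, hdist rt (lf u) hrtK (hlfK u)]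
    exact hle
  refine ⟨K, t.induce K, ⟨rt, hrtK⟩, fun w => lab w.1, S, fun u => ⟨lf u, hlfK u⟩, ?_⟩
  refine
    { isTree := hTind
      heightLe := ?_
      leafDepth := ?_
      embInj := ?_
      leavesEq := ?_
      leafLab := ?_
      internalLab := ?_
      sigSub := M.sigSub
      sigSymm := M.sigSymm
      edge := ?_ }
  · rintro ⟨w, hw⟩
    rw [hdist rt w hrtK hw]
    exact M.heightLe w
  · rintro ⟨w, hw⟩ hleaf
    obtain ⟨u, rfl⟩ := hleafK w hw hleaf
    rw [hdist rt (lf u) hrtK hw]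
    exact M.leafDepth (lf u) (htleaflf u)
  · intro a b hab
    have : lf a = lf b := congrArg Subtype.val hab
    exact hinj (M.embInj this)
  · ext x
    simp only [Set.mem_range, Set.mem_setOf_eq]
    constructor
    · rintro ⟨u, rfl⟩
      exact hleaflf u
    · intro hx
      obtain ⟨w, hw⟩ := x
      obtain ⟨u, hu⟩ := hleafK w hw hx
      exact ⟨u, Subtype.ext hu.symm⟩
  · intro u
    exact M.leafLab (f u)
  · rintro ⟨w, hw⟩ hnl
    have hwK := hw
    apply M.internalLab
    intro hleafw
    obtain ⟨u, hu⟩ := hwK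
    have hd1 : t.dist rt w = d := M.leafDepth w hleafw
    have hd2 : t.dist rt (lf u) = d := M.leafDepth (lf u) (htleaflf u)
    have hz : t.dist w (lf u) = 0 := by omega
    have hwe : w = lf u := hconn.dist_eq_zero_iff.mp hz
    apply hnl
    have he : (⟨w, hw⟩ : K) = ⟨lf u, hlfK u⟩ := Subtype.ext hwe
    rw [he]
    exact hleaflf u
  · intro u u' l hd
    rw [hdist (lf u) (lf u') (hlfK u) (hlfK u')] at hd
    rw [hadj u u']
    exact M.edge (f u) (f u') l hd

end UltrarootAux

/-- `TM(r,d)` is closed under ultraroots: if some ultrapower of a graph `H`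
belongs to `TM(r,d)`, then so does `H`. -/
theorem ultraroot_closed_TM (r d : ℕ) {W : Type} (H : SimpleGraph W)
    {I : Type} (U : Ultrafilter I)
    (h : InTM r d (UltraProdGraph U (fun _ : I => H))) :
    InTM r d H := by
  classical
  haveI : Nonempty I := Filter.nonempty_of_neBot (U : Filter I)
  refine inTM_of_embed
    (fun a : W => Quotient.mk (UltraSetoid U (fun _ : I => W)) (fun _ => a)) ?_ ?_ ?_ h
  · intro a b hab
    by_contra hne
    have hrel : {i : I | (fun _ : I => a) i = (fun _ : I => b) i} ∈ U := Quotient.exact hab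
    have he : {i : I | (fun _ : I => a) i = (fun _ : I => b) i} = (∅ : Set I) := by
      ext i; simp [hne]
    rw [he] at hrel
    exact Filter.empty_notMem (U : Filter I) hrel
  · intro u v
    show H.Adj u v ↔ {i : I | H.Adj u v} ∈ U
    constructor
    · intro hA
      have he : {i : I | H.Adj u v} = Set.univ := Set.eq_univ_of_forall fun i => hA
      rw [he]
      exact Filter.univ_mem
    · intro hU
      obtain ⟨i, hi⟩ := Ultrafilter.nonempty_of_mem hU
      exact hi
  · rintro ⟨x⟩
    exact ⟨x.out (Classical.arbitrary I)⟩

end PF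
end

section
/- For all r, d ∈ ℕ, a finite graph is FO-pseudo-finite relative to TM_fin(r,d) (equivalently, MSO-pseudo-finite relative to TM_fin(r,d)) if and only if it belongs to TM_fin(r,d); in other words, no finite graph outside TM_fin(r,d) satisfies Th_FO(TM_fin(r,d)). -/
universe u v w

namespace PF

variable {R : Type u} {ar : R → ℕ}

/-! ### Auxiliary material for Statement 19 -/

section Aux

variable {R : Type u} {ar : R → ℕ}

/-- A closed FO tautology. -/
def trueF : MSO R ar := .not (.exFO 0 (.not (.eq 0 0)))

lemma sat_trueF (A : Struct.{u, v} R ar) (ν : ℕ → Option A.carrier)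
    (μ : ℕ → Set A.carrier) : MSO.Sat A (trueF : MSO R ar) ν μ := by
  rintro ⟨x, hx⟩
  exact hx ⟨x, by simp [Function.update], by simp [Function.update]⟩

/-- Conjunction of a list of formulas. -/
def andList (L : List (MSO R ar)) : MSO R ar := L.foldr .and trueF

lemma sat_andList (A : Struct.{u, v} R ar) (L : List (MSO R ar))
    (ν : ℕ → Option A.carrier) (μ : ℕ → Set A.carrier) :
    MSO.Sat A (andList L) ν μ ↔ ∀ φ ∈ L, MSO.Sat A φ ν μ := by
  induction L with
  | nil => simpa [andList] using sat_trueF A ν μ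
  | cons φ tl ih =>
    show MSO.Sat A φ ν μ ∧ MSO.Sat A (andList tl) ν μ ↔ _
    rw [ih]; simp

lemma isFO_andList {L : List (MSO R ar)} (h : ∀ φ ∈ L, φ.IsFO) :
    (andList L).IsFO := by
  induction L with
  | nil => trivial
  | cons φ tl ih =>
    exact ⟨h φ (by simp), ih fun ψ hψ => h ψ (by simp [hψ])⟩

lemma freeFO_andList {L : List (MSO R ar)} {s : Set ℕ}
    (h : ∀ φ ∈ L, φ.freeFO ⊆ s) : (andList L).freeFO ⊆ s := by
  induction L with
  | nil =>
    show (trueF : MSO R ar).freeFO ⊆ s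
    simp [trueF, MSO.freeFO]
  | cons φ tl ih =>
    show φ.freeFO ∪ _ ⊆ s
    exact Set.union_subset (h φ (by simp)) (ih fun ψ hψ => h ψ (by simp [hψ]))

lemma MSO.freeSO_eq_empty {φ : MSO R ar} (h : φ.IsFO) : φ.freeSO = ∅ := by
  induction φ with
  | eq => rfl
  | rel => rfl
  | mem => exact h.elim
  | not φ ih => exact ih h
  | and φ ψ ih1 ih2 =>
    show φ.freeSO ∪ ψ.freeSO = ∅
    rw [ih1 h.1, ih2 h.2, Set.union_empty]
  | exFO i φ ih => exact ih h
  | exSO => exact h.elim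

/-- Iterated existential quantification over variables `0, …, k-1`. -/
def exN : ℕ → MSO R ar → MSO R ar
  | 0, φ => φ
  | k + 1, φ => exN k (.exFO k φ)

lemma isFO_exN {k : ℕ} {φ : MSO R ar} (h : φ.IsFO) : (exN k φ).IsFO := by
  induction k generalizing φ with
  | zero => exact h
  | succ k ih => exact ih h

lemma freeFO_exN (k : ℕ) (φ : MSO R ar) :
    (exN k φ).freeFO ⊆ {m | m ∈ φ.freeFO ∧ k ≤ m} := by
  induction k generalizing φ with
  | zero => exact fun m hm => ⟨hm, Nat.zero_le m⟩
  | succ k ih =>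
    intro m hm
    obtain ⟨h1, h2⟩ := ih (.exFO k φ) hm
    have h1' : m ∈ φ.freeFO \ {k} := h1
    exact ⟨h1'.1, Nat.lt_of_le_of_ne h2 fun hk => h1'.2 (by simp [hk.symm])⟩

lemma sat_exN (A : Struct.{u, v} R ar) (k : ℕ) (φ : MSO R ar)
    (ν : ℕ → Option A.carrier) (μ : ℕ → Set A.carrier) :
    MSO.Sat A (exN k φ) ν μ ↔
      ∃ f : Fin k → A.carrier,
        MSO.Sat A φ (fun m => if h : m < k then some (f ⟨m, h⟩) else ν m) μ := by
  induction k generalizing φ with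
  | zero =>
    have key : ∀ f : Fin 0 → A.carrier,
        (fun m => if h : m < 0 then some (f ⟨m, h⟩) else ν m) = ν :=
      fun f => funext fun m => dif_neg (Nat.not_lt_zero m)
    exact ⟨fun h => ⟨Fin.elim0, (key Fin.elim0).symm ▸ h⟩, fun ⟨f, h⟩ => (key f) ▸ h⟩
  | succ k ih =>
    show MSO.Sat A (exN k (.exFO k φ)) ν μ ↔ _
    rw [ih]
    constructor
    · rintro ⟨f, x, hx⟩
      refine ⟨fun i => if h : (i : ℕ) < k then f ⟨i, h⟩ else x, ?_⟩
      have heq : Function.update (fun m => if h : m < k then some (f ⟨m, h⟩) else ν m) k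
          (some x) = (fun m => if h : m < k + 1 then
            some ((fun i : Fin (k+1) => if h : (i : ℕ) < k then f ⟨i, h⟩ else x) ⟨m, h⟩)
          else ν m) := by
        funext m
        rcases lt_trichotomy m k with hm | rfl | hm
        · rw [Function.update_of_ne (Nat.ne_of_lt hm)]
          simp [hm, Nat.lt_succ_of_lt hm]
        · simp
        · rw [Function.update_of_ne (Nat.ne_of_gt hm)]
          simp [Nat.not_lt.mpr (Nat.le_of_lt hm), Nat.not_lt.mpr (Nat.succ_le_of_lt hm)]
      exact heq ▸ hx
    · rintro ⟨g, hg⟩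
      refine ⟨fun i => g i.castSucc, g (Fin.last k), ?_⟩
      have heq : (fun m => if h : m < k + 1 then some (g ⟨m, h⟩) else ν m) =
          Function.update (fun m => if h : m < k then
            some ((fun i : Fin k => g i.castSucc) ⟨m, h⟩) else ν m) k
            (some (g (Fin.last k))) := by
        funext m
        rcases lt_trichotomy m k with hm | rfl | hm
        · rw [Function.update_of_ne (Nat.ne_of_lt hm)]
          simp only [dif_pos hm, dif_pos (Nat.lt_succ_of_lt hm)]
          rfl
        · simp only [Function.update_self, dif_pos (Nat.lt_succ_self m)]
          rfl
        · rw [Function.update_of_ne (Nat.ne_of_gt hm)]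
          simp [Nat.not_lt.mpr (Nat.le_of_lt hm), Nat.not_lt.mpr (Nat.succ_le_of_lt hm)]
      exact heq ▸ hg

end Aux
section Sentence

/-- The atomic edge formula `E(i, j)`. -/
def edgeAtom (i j : ℕ) : MSO Unit graphAr := .rel () ![i, j]

lemma sat_edgeAtom {W : Type} (H : SimpleGraph W) (i j : ℕ)
    (ν : ℕ → Option W) (μ : ℕ → Set W) (x y : W)
    (hx : ν i = some x) (hy : ν j = some y) :
    MSO.Sat (graphStruct H) (edgeAtom i j) ν μ ↔ H.Adj x y := by
  constructor
  · rintro ⟨g, hg, hadj⟩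
    have h0 := hg 0
    have h1 := hg 1
    simp only [Matrix.cons_val_zero, Matrix.cons_val_one, Matrix.head_cons] at h0 h1
    rw [hx] at h0; rw [hy] at h1
    obtain rfl : x = g 0 := Option.some.inj h0
    obtain rfl : y = g 1 := Option.some.inj h1
    exact hadj
  · intro h
    refine ⟨![x, y], fun k => ?_, ?_⟩
    · fin_cases k <;> simpa
    · exact h

lemma sat_eqAtom {W : Type} (H : SimpleGraph W) (i j : ℕ)
    (ν : ℕ → Option W) (μ : ℕ → Set W) (x y : W)
    (hx : ν i = some x) (hy : ν j = some y) :
    MSO.Sat (graphStruct H) (.eq i j : MSO Unit graphAr) ν μ ↔ x = y := by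
  constructor
  · rintro ⟨z, hz1, hz2⟩
    rw [hx] at hz1; rw [hy] at hz2
    exact (Option.some.inj hz1).trans (Option.some.inj hz2).symm
  · rintro rfl
    exact ⟨x, hx, hy⟩

variable {V : Type} [Fintype V] [DecidableEq V]

/-- The list of all ordered pairs of distinct vertices. -/
noncomputable def pairList (V : Type) [Fintype V] [DecidableEq V] : List (V × V) :=
  (Finset.univ.filter fun p : V × V => p.1 ≠ p.2).toList

lemma mem_pairList {u v : V} (h : u ≠ v) : (u, v) ∈ pairList V := by
  simp [pairList, h]

lemma ne_of_mem_pairList {p : V × V} (h : p ∈ pairList V) : p.1 ≠ p.2 := by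
  simpa [pairList] using h

variable (G : SimpleGraph V) {n : ℕ} (e : V ≃ Fin n)

open scoped Classical in
/-- The formula describing the relation between vertices `u` and `v`. -/
noncomputable def pairForm (u v : V) : MSO Unit graphAr :=
  if G.Adj u v then edgeAtom (e u) (e v)
  else .and (.not (edgeAtom (e u) (e v))) (.not (.eq (e u) (e v)))

/-- The coverage formula: every element is one of `x_0, …, x_{n-1}`. -/
def covForm (n : ℕ) : MSO Unit graphAr :=
  .not (.exFO n (andList ((List.range n).map fun i => .not (.eq n i))))

noncomputable def psiF : MSO Unit graphAr :=
  .and (andList ((pairList V).map fun p => pairForm G e p.1 p.2)) (covForm n)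

/-- A sentence characterising `G` up to isomorphism. -/
noncomputable def sentenceG : MSO Unit graphAr := exN n (psiF G e)

lemma isFO_sentenceG : (sentenceG G e).IsFO := by
  refine isFO_exN ⟨isFO_andList ?_, isFO_andList ?_⟩
  · rintro φ hφ
    simp only [List.mem_map] at hφ
    obtain ⟨p, -, rfl⟩ := hφ
    by_cases h : G.Adj p.1 p.2
    · rw [pairForm, if_pos h]; exact trivial
    · rw [pairForm, if_neg h]; exact ⟨trivial, trivial⟩
  · rintro φ hφ
    simp only [List.mem_map] at hφ
    obtain ⟨i, -, rfl⟩ := hφ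
    exact trivial

lemma freeFO_edgeAtom_subset (i j : ℕ) : (edgeAtom i j).freeFO ⊆ {i, j} := by
  rintro m ⟨k, rfl⟩
  fin_cases k <;> simp

lemma freeFO_psiF_subset : (psiF G e).freeFO ⊆ {m | m < n} := by
  refine Set.union_subset (freeFO_andList ?_) ?_
  · rintro φ hφ
    simp only [List.mem_map] at hφ
    obtain ⟨p, -, rfl⟩ := hφ
    have hsub : ∀ u v : V, (edgeAtom ((e u : Fin n) : ℕ) ((e v : Fin n) : ℕ)).freeFO
        ⊆ {m | m < n} := by
      intro u v m hm
      rcases freeFO_edgeAtom_subset _ _ hm with rfl | rfl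
      · exact (e u).isLt
      · exact (e v).isLt
    by_cases h : G.Adj p.1 p.2
    · rw [pairForm, if_pos h]
      exact hsub p.1 p.2
    · rw [pairForm, if_neg h]
      refine Set.union_subset (hsub p.1 p.2) ?_
      rintro m hm
      rcases hm with rfl | rfl
      · exact (e p.1).isLt
      · exact (e p.2).isLt
  · intro m hm
    have hm' : m ∈ (andList ((List.range n).map fun i =>
        (.not (.eq n i) : MSO Unit graphAr))).freeFO \ {n} := hm
    have hsub : (andList ((List.range n).map fun i =>
        (.not (.eq n i) : MSO Unit graphAr))).freeFO ⊆ {m | m = n ∨ m < n} := by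
      refine freeFO_andList ?_
      rintro φ hφ
      simp only [List.mem_map, List.mem_range] at hφ
      obtain ⟨i, hi, rfl⟩ := hφ
      rintro m hm
      rcases hm with rfl | rfl
      · exact Or.inl rfl
      · exact Or.inr hi
    rcases hsub hm'.1 with h | h
    · exact absurd h hm'.2
    · exact h

lemma closed_sentenceG : (sentenceG G e).Closed := by
  refine ⟨Set.eq_empty_of_subset_empty fun m hm => ?_,
    MSO.freeSO_eq_empty (isFO_sentenceG G e)⟩
  obtain ⟨h1, h2⟩ := freeFO_exN n (psiF G e) hm
  exact absurd h2 (Nat.not_le.mpr (freeFO_psiF_subset G e h1))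

end Sentence
section Semantics

variable {V W : Type} [Fintype V] [DecidableEq V] (G : SimpleGraph V) {n : ℕ}
  (e : V ≃ Fin n) (H : SimpleGraph W)

lemma models_sentenceG_iff :
    (graphStruct H).Models (sentenceG G e) ↔
      ∃ b : V → W, Function.Bijective b ∧ ∀ u v, G.Adj u v ↔ H.Adj (b u) (b v) := by
  rw [Struct.Models, sentenceG, sat_exN]
  constructor
  · rintro ⟨f, hsat⟩
    set ν : ℕ → Option W :=
      fun m => if h : m < n then some (f ⟨m, h⟩) else (none : Option W) with hν
    have hνval : ∀ i : Fin n, ν (i : ℕ) = some (f i) := by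
      intro i
      simp [hν, i.isLt]; rfl
    obtain ⟨hpairs, hcov⟩ := hsat
    rw [sat_andList] at hpairs
    set b : V → W := fun u => f (e u) with hb
    have hkey : ∀ u v : V, u ≠ v →
        (G.Adj u v → H.Adj (b u) (b v)) ∧
        (¬ G.Adj u v → ¬ H.Adj (b u) (b v) ∧ b u ≠ b v) := by
      intro u v huv
      have hmem := hpairs (pairForm G e u v)
        (List.mem_map.mpr ⟨(u, v), mem_pairList huv, rfl⟩)
      constructor
      · intro hadj
        rw [pairForm, if_pos hadj] at hmem
        exact (sat_edgeAtom H _ _ ν _ (b u) (b v) (hνval (e u)) (hνval (e v))).1 hmem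
      · intro hnadj
        rw [pairForm, if_neg hnadj] at hmem
        obtain ⟨hm1, hm2⟩ := hmem
        constructor
        · intro hadj
          exact hm1 ((sat_edgeAtom H _ _ ν _ (b u) (b v)
            (hνval (e u)) (hνval (e v))).2 hadj)
        · intro heq
          exact hm2 ((sat_eqAtom H _ _ ν _ (b u) (b v)
            (hνval (e u)) (hνval (e v))).2 heq)
    have hsurj : Function.Surjective b := by
      intro w
      by_contra hw
      push_neg at hw
      refine hcov ⟨w, ?_⟩
      rw [sat_andList]
      rintro φ hφ
      simp only [List.mem_map, List.mem_range] at hφ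
      obtain ⟨i, hi, rfl⟩ := hφ
      rintro hsat'
      set ν' := Function.update ν n (some w) with hν'
      have hn : ν' n = some w := Function.update_self _ _ _
      have hi' : ν' i = some (f ⟨i, hi⟩) := by
        rw [hν', Function.update_of_ne (Nat.ne_of_lt hi)]
        simp [hν, hi]; rfl
      have := (sat_eqAtom H n i ν' _ w (f ⟨i, hi⟩) hn hi').1 hsat'
      exact hw (e.symm (⟨i, hi⟩ : Fin n)) (by rw [hb]; simp [e.apply_symm_apply]; exact this.symm)
    have hinj : Function.Injective b := by
      intro u v heq
      by_contra huv
      by_cases hadj : G.Adj u v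
      · exact ((hkey u v huv).1 hadj).ne (by rw [heq])
      · exact ((hkey u v huv).2 hadj).2 heq
    refine ⟨b, ⟨hinj, hsurj⟩, fun u v => ?_⟩
    by_cases huv : u = v
    · subst huv
      simp only [SimpleGraph.irrefl]
    constructor
    · exact fun h => (hkey u v huv).1 h
    · intro h
      by_contra hnadj
      exact ((hkey u v huv).2 hnadj).1 h
  · rintro ⟨b, ⟨hinj, hsurj⟩, hiff⟩
    refine ⟨fun i => b (e.symm i), ?_, ?_⟩
    · set ν : ℕ → Option W :=
        fun m => if h : m < n then some (b (e.symm ⟨m, h⟩)) else (none : Option W) with hν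
      have hνval : ∀ u : V, ν ((e u : Fin n) : ℕ) = some (b u) := by
        intro u
        simp [hν, (e u).isLt]
      rw [sat_andList]
      rintro φ hφ
      simp only [List.mem_map] at hφ
      obtain ⟨p, hp, rfl⟩ := hφ
      have hne := ne_of_mem_pairList hp
      by_cases hadj : G.Adj p.1 p.2
      · rw [pairForm, if_pos hadj]
        exact (sat_edgeAtom H _ _ ν _ (b p.1) (b p.2) (hνval p.1) (hνval p.2)).2
          ((hiff p.1 p.2).1 hadj)
      · rw [pairForm, if_neg hadj]
        refine ⟨fun hs => ?_, fun hs => ?_⟩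
        · exact hadj ((hiff p.1 p.2).2
            ((sat_edgeAtom H _ _ ν _ (b p.1) (b p.2) (hνval p.1) (hνval p.2)).1 hs))
        · exact hne (hinj ((sat_eqAtom H _ _ ν _ (b p.1) (b p.2)
            (hνval p.1) (hνval p.2)).1 hs))
    · rintro ⟨w, hw⟩
      rw [sat_andList] at hw
      obtain ⟨u, hu⟩ := hsurj w
      have hmem : (.not (.eq n ((e u : Fin n) : ℕ)) : MSO Unit graphAr) ∈
          (List.range n).map fun i => (.not (.eq n i) : MSO Unit graphAr) :=
        List.mem_map.mpr ⟨(e u : Fin n), List.mem_range.mpr (e u).isLt, rfl⟩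
      refine hw _ hmem ?_
      refine (sat_eqAtom H _ _ _ _ w (b u) (Function.update_self _ _ _) ?_).2 hu.symm
      erw [Function.update_of_ne (Nat.ne_of_lt (e u).isLt)]
      simp [(e u).isLt]; rfl

end Semantics
section Transport

lemma inTM_of_iso {r d : ℕ} {V W : Type} (G : SimpleGraph V) (H : SimpleGraph W)
    (b : V ≃ W) (hadj : ∀ u v, G.Adj u v ↔ H.Adj (b u) (b v))
    (h : InTM r d H) : InTM r d G := by
  obtain ⟨W', t, rt, lab, S, emb, M⟩ := h
  refine ⟨W', t, rt, lab, S, emb ∘ b, ?_⟩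
  refine
    { isTree := M.isTree
      heightLe := M.heightLe
      leafDepth := M.leafDepth
      embInj := M.embInj.comp b.injective
      leavesEq := ?_
      leafLab := fun u => M.leafLab (b u)
      internalLab := M.internalLab
      sigSub := M.sigSub
      sigSymm := M.sigSymm
      edge := ?_ }
  · rw [Set.range_comp, b.surjective.range_eq, Set.image_univ, M.leavesEq]
  · intro u u' l hdist
    rw [hadj]
    exact M.edge (b u) (b u') l hdist

end Transport
/-- A finite graph is FO-pseudo-finite relative to `TM_fin(r,d)`
(equivalently, MSO-pseudo-finite relative to `TM_fin(r,d)`) iff it belongs to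
`TM_fin(r,d)`. -/
theorem finite_pseudoFinite_iff_TMfin (r d : ℕ) (V : Type) [Finite V]
    (G : SimpleGraph V) :
    ((∀ φ : MSO Unit graphAr, φ.IsFO → φ.Closed →
        (∀ (W : Type) (H : SimpleGraph W), Finite W → InTM r d H →
          (graphStruct H).Models φ) →
        (graphStruct G).Models φ) ↔ InTM r d G) ∧
    ((∀ φ : MSO Unit graphAr, φ.Closed →
        (∀ (W : Type) (H : SimpleGraph W), Finite W → InTM r d H →
          (graphStruct H).Models φ) →
        (graphStruct G).Models φ) ↔ InTM r d G) := by
  classical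
  have : Fintype V := Fintype.ofFinite V
  obtain ⟨n, ⟨e⟩⟩ := Finite.exists_equiv_fin V
  have hard : (∀ φ : MSO Unit graphAr, φ.IsFO → φ.Closed →
      (∀ (W : Type) (H : SimpleGraph W), Finite W → InTM r d H →
        (graphStruct H).Models φ) →
      (graphStruct G).Models φ) → InTM r d G := by
    intro hyp
    by_contra hG
    have hGmod : (graphStruct G).Models (sentenceG G e) :=
      (models_sentenceG_iff G e G).2 ⟨id, Function.bijective_id, fun u v => Iff.rfl⟩
    have hnot : (graphStruct G).Models (.not (sentenceG G e)) := by
      refine hyp (.not (sentenceG G e)) (isFO_sentenceG G e) (closed_sentenceG G e) ?_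
      intro W H _ hH hsat
      obtain ⟨b, hbij, hiff⟩ := (models_sentenceG_iff G e H).1 hsat
      exact hG (inTM_of_iso G H (Equiv.ofBijective b hbij) hiff hH)
    exact hnot hGmod
  have easy : InTM r d G → ∀ φ : MSO Unit graphAr, φ.Closed →
      (∀ (W : Type) (H : SimpleGraph W), Finite W → InTM r d H →
        (graphStruct H).Models φ) →
      (graphStruct G).Models φ :=
    fun h φ _ hall => hall V G ‹Finite V› h
  exact ⟨⟨hard, fun h φ _ hcl hall => easy h φ hcl hall⟩,
    ⟨fun hyp => hard fun φ hFO hcl hall => hyp φ hcl hall,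
      fun h φ hcl hall => easy h φ hcl hall⟩⟩

end PF
end
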